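/- Let N be an abelian minimal normal subgroup of a finite group G with N ≠ G, and let g_1N, …, g_dN be a minimum generating set of G/N (so d = d(G/N)). Then d(G) ∈ {d, d+1}, and: if d(G) = d, then either (g_1, …, g_d) generates G or there exist an index 1 ≤ i ≤ d and an element e ∈ N, e ≠ 1, such that (g_1, …, g_{i-1}, g_ie, g_{i+1}, …, g_d) generates G; if d(G) = d + 1, then (g_1, …, g_d, n) generates G for every n ∈ N with n ≠ 1. -/

import Mathlib

open Subgroup

section Aux
variable {G : Type*} [Group G] (N : Subgroup G) [hNn : N.Normal]

private lemma aux_sup (K : Subgroup G) (h : K.map (QuotientGroup.mk' N) = ⊤) : K ⊔ N = ⊤ := by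
  have h2 := Subgroup.comap_map_eq (f := QuotientGroup.mk' N) (H := K)
  rw [h, QuotientGroup.ker_mk'] at h2
  rw [← h2, Subgroup.comap_top]

private lemma aux_top (K : Subgroup G) (hle : N ≤ K) (h : K.map (QuotientGroup.mk' N) = ⊤) :
    K = ⊤ := by
  have h' := aux_sup N K h
  rwa [sup_eq_left.mpr hle] at h'

private lemma aux_dich (hNmin : ∀ M : Subgroup G, M.Normal → M ≤ N → M = ⊥ ∨ M = N)
    (habelian : ∀ a ∈ N, ∀ b ∈ N, a * b = b * a)
    (K : Subgroup G) (hKN : K ⊔ N = ⊤) : K ⊓ N = ⊥ ∨ N ≤ K := by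
  have hnorm : (K ⊓ N).Normal := by
    rw [← Subgroup.normalizer_eq_top_iff, eq_top_iff, ← hKN]
    apply sup_le
    · intro k hk
      rw [Subgroup.mem_normalizer_iff]
      intro x
      constructor
      · rintro ⟨hxK, hxN⟩
        exact ⟨K.mul_mem (K.mul_mem hk hxK) (K.inv_mem hk), hNn.conj_mem x hxN k⟩
      · rintro ⟨hxK, hxN⟩
        have h1 : x = k⁻¹ * (k * x * k⁻¹) * k := by group
        constructor
        · rw [h1]; exact K.mul_mem (K.mul_mem (K.inv_mem hk) hxK) hk
        · rw [h1]
          have := hNn.conj_mem _ hxN k⁻¹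
          simpa using this
    · intro n hn
      rw [Subgroup.mem_normalizer_iff]
      intro x
      constructor
      · rintro ⟨hxK, hxN⟩
        have hx : n * x * n⁻¹ = x := by
          rw [habelian n hn x hxN]; group
        rw [hx]; exact ⟨hxK, hxN⟩
      · rintro ⟨hxK, hxN⟩
        have hxN' : x ∈ N := by
          have := hNn.conj_mem _ hxN n⁻¹
          simpa [mul_assoc] using this
        have hx : n * x * n⁻¹ = x := by
          rw [habelian n hn x hxN']; group
        rw [hx] at hxK
        exact ⟨hxK, hxN'⟩
  rcases hNmin _ hnorm inf_le_right with h | h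
  · exact Or.inl h
  · exact Or.inr (h ▸ inf_le_left)

private lemma aux_split (K : Subgroup G) (hmap : K.map (QuotientGroup.mk' N) = ⊤)
    (hint : K ⊓ N = ⊥) :
    ∃ σ : G ⧸ N →* G, (∀ x, QuotientGroup.mk' N (σ x) = x) ∧ (∀ x, σ x ∈ K) ∧
      ∀ k ∈ K, σ (QuotientGroup.mk' N k) = k := by
  have hinj : Function.Injective ((QuotientGroup.mk' N).comp K.subtype) := by
    intro a b hab
    have h1 : (a : G) * (b : G)⁻¹ ∈ N := by
      rw [← QuotientGroup.ker_mk' N, MonoidHom.mem_ker, map_mul, map_inv,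
        mul_inv_eq_one]
      exact hab
    have h2 : (a : G) * (b : G)⁻¹ ∈ K := K.mul_mem a.2 (K.inv_mem b.2)
    have h3 : (a : G) * (b : G)⁻¹ ∈ K ⊓ N := ⟨h2, h1⟩
    rw [hint, Subgroup.mem_bot, mul_inv_eq_one] at h3
    exact Subtype.ext h3
  have hsurj : Function.Surjective ((QuotientGroup.mk' N).comp K.subtype) := by
    intro x
    have hx : x ∈ K.map (QuotientGroup.mk' N) := by rw [hmap]; exact Subgroup.mem_top x
    obtain ⟨k, hk, hkx⟩ := hx
    exact ⟨⟨k, hk⟩, hkx⟩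
  let e := MulEquiv.ofBijective ((QuotientGroup.mk' N).comp K.subtype) ⟨hinj, hsurj⟩
  refine ⟨K.subtype.comp e.symm.toMonoidHom, fun x => e.apply_symm_apply x,
    fun x => (e.symm x).2, fun k hk => ?_⟩
  have h4 : e ⟨k, hk⟩ = QuotientGroup.mk' N k := rfl
  show K.subtype (e.symm (QuotientGroup.mk' N k)) = k
  rw [← h4, e.symm_apply_apply]
  rfl

end Aux

theorem abelian_minimal_normal_min_generating
    {G : Type*} [Group G] [Finite G]
    (N : Subgroup G) (hNnormal : N.Normal) (hNne : N ≠ ⊥) (hNtop : N ≠ ⊤)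
    (hNmin : ∀ M : Subgroup G, M.Normal → M ≤ N → M = ⊥ ∨ M = N)
    (habelian : ∀ a ∈ N, ∀ b ∈ N, a * b = b * a)
    (d : ℕ) (g : Fin d → G)
    (hd : d = Group.rank (G ⧸ N))
    (hgen : Subgroup.closure
      (Set.range fun i => ((g i : G) : G ⧸ N)) = ⊤) :
    (Group.rank G = d ∨ Group.rank G = d + 1) ∧
    (Group.rank G = d →
      Subgroup.closure (Set.range g) = ⊤ ∨
        ∃ i : Fin d, ∃ e ∈ N, e ≠ 1 ∧
          Subgroup.closure (Set.range (Function.update g i (g i * e))) = ⊤) ∧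
    (Group.rank G = d + 1 →
      ∀ n ∈ N, n ≠ 1 → Subgroup.closure (Set.range g ∪ {n}) = ⊤) := by
  classical
  haveI := hNnormal
  set π := QuotientGroup.mk' N with hπdef
  have hπsurj : Function.Surjective π := QuotientGroup.mk'_surjective N
  have hπmem : ∀ x : G, π x = 1 ↔ x ∈ N := fun x => QuotientGroup.eq_one_iff x
  have hcoe : ∀ x : G, ((x : G ⧸ N)) = π x := fun x => rfl
  -- the third clause, unconditionally
  have hthird : ∀ n ∈ N, n ≠ 1 → Subgroup.closure (Set.range g ∪ {n}) = ⊤ := by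
    intro n hn hn1
    set K := Subgroup.closure (Set.range g ∪ {n}) with hKdef
    have hmap : K.map π = ⊤ := by
      rw [eq_top_iff, ← hgen]
      refine (Subgroup.closure_le _).mpr ?_
      rintro _ ⟨i, rfl⟩
      exact ⟨g i, Subgroup.subset_closure (Or.inl ⟨i, rfl⟩), rfl⟩
    have hnK : n ∈ K := Subgroup.subset_closure (Or.inr rfl)
    rcases aux_dich N hNmin habelian K (aux_sup N K hmap) with h | h
    · exfalso
      apply hn1
      have h' : n ∈ K ⊓ N := ⟨hnK, hn⟩
      rwa [h, Subgroup.mem_bot] at h'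
    · exact aux_top N K h hmap
  -- existence of a nontrivial element of N
  obtain ⟨n₀, hn₀N, hn₀1⟩ : ∃ n ∈ N, n ≠ 1 := by
    by_contra hc
    push_neg at hc
    exact hNne (Subgroup.eq_bot_iff_forall N |>.mpr hc)
  -- lower bound
  have hle1 : d ≤ Group.rank G := by
    rw [hd]
    exact Group.rank_le_of_surjective π hπsurj
  -- upper bound
  have hle2 : Group.rank G ≤ d + 1 := by
    set S : Finset G := Finset.univ.image g ∪ {n₀} with hSdef
    have hScoe : (S : Set G) = Set.range g ∪ {n₀} := by
      simp [hSdef, Set.image_univ]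
    have hSclo : Subgroup.closure (S : Set G) = ⊤ := by
      rw [hScoe]; exact hthird n₀ hn₀N hn₀1
    calc Group.rank G ≤ S.card := Group.rank_le hSclo
      _ ≤ (Finset.univ.image g).card + ({n₀} : Finset G).card := Finset.card_union_le _ _
      _ ≤ d + 1 := by
          have := Finset.card_image_le (s := (Finset.univ : Finset (Fin d))) (f := g)
          simp only [Finset.card_univ, Fintype.card_fin] at this
          simpa using this
  refine ⟨by omega, ?_, fun _ => hthird⟩
  -- the hard clause
  intro hrk
  by_contra hcon
  push_neg at hcon
  obtain ⟨hng, hcontra⟩ := hcon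
  -- H is a complement
  set H := Subgroup.closure (Set.range g) with hHdef
  have hHmap : H.map π = ⊤ := by
    rw [eq_top_iff, ← hgen]
    refine (Subgroup.closure_le _).mpr ?_
    rintro _ ⟨i, rfl⟩
    exact ⟨g i, Subgroup.subset_closure ⟨i, rfl⟩, rfl⟩
  have hHinf : H ⊓ N = ⊥ := by
    rcases aux_dich N hNmin habelian H (aux_sup N H hHmap) with h | h
    · exact h
    · exact absurd (aux_top N H h hHmap) hng
  obtain ⟨s, hs1, hs2, hs3⟩ := aux_split N H hHmap hHinf
  have hsg : ∀ i, s (π (g i)) = g i := fun i =>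
    hs3 (g i) (Subgroup.subset_closure ⟨i, rfl⟩)
  -- the group of 1-cocycles
  let Z : Subgroup (G ⧸ N → G) :=
    { carrier := {δ | (∀ x, δ x ∈ N) ∧
        ∀ x y, δ (x * y) = (s y)⁻¹ * δ x * s y * δ y}
      one_mem' := by
        refine ⟨fun x => N.one_mem, fun x y => ?_⟩
        simp
      mul_mem' := by
        rintro δ δ' ⟨hδN, hδc⟩ ⟨hδ'N, hδ'c⟩
        refine ⟨fun x => N.mul_mem (hδN x) (hδ'N x), fun x y => ?_⟩
        show δ (x * y) * δ' (x * y) =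
          (s y)⁻¹ * (δ x * δ' x) * s y * (δ y * δ' y)
        rw [hδc, hδ'c]
        have hc : Commute (δ y) ((s y)⁻¹ * δ' x * s y) := by
          have hmem : (s y)⁻¹ * δ' x * s y ∈ N := by
            have := hNnormal.conj_mem _ (hδ'N x) (s y)⁻¹
            simpa using this
          exact habelian (δ y) (hδN y) _ hmem
        calc (s y)⁻¹ * δ x * s y * δ y * ((s y)⁻¹ * δ' x * s y * δ' y)
            = ((s y)⁻¹ * δ x * s y) * δ y * (((s y)⁻¹ * δ' x * s y) * δ' y) := by
              group
          _ = ((s y)⁻¹ * δ x * s y) * ((s y)⁻¹ * δ' x * s y) * (δ y * δ' y) := by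
              rw [Commute.mul_mul_mul_comm hc]
          _ = (s y)⁻¹ * (δ x * δ' x) * s y * (δ y * δ' y) := by group
      inv_mem' := by
        rintro δ ⟨hδN, hδc⟩
        refine ⟨fun x => N.inv_mem (hδN x), fun x y => ?_⟩
        show (δ (x * y))⁻¹ = (s y)⁻¹ * (δ x)⁻¹ * s y * (δ y)⁻¹
        rw [hδc]
        have hc : Commute ((s y)⁻¹ * δ x * s y) (δ y) := by
          have hmem : (s y)⁻¹ * δ x * s y ∈ N := by
            have := hNnormal.conj_mem _ (hδN x) (s y)⁻¹
            simpa using this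
          exact (habelian (δ y) (hδN y) _ hmem).symm
        calc ((s y)⁻¹ * δ x * s y * δ y)⁻¹
            = (((s y)⁻¹ * δ x * s y) * δ y)⁻¹ := by group
          _ = ((s y)⁻¹ * δ x * s y)⁻¹ * (δ y)⁻¹ := by
              rw [(hc.inv_inv).eq, mul_inv_rev]
          _ = (s y)⁻¹ * (δ x)⁻¹ * s y * (δ y)⁻¹ := by group }
  have hZmem : ∀ δ : G ⧸ N → G, δ ∈ Z ↔ ((∀ x, δ x ∈ N) ∧
      ∀ x y, δ (x * y) = (s y)⁻¹ * δ x * s y * δ y) := fun δ => Iff.rfl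
  -- basic facts about cocycles
  have hZone : ∀ δ : G ⧸ N → G, δ ∈ Z → δ 1 = 1 := by
    intro δ hδ
    obtain ⟨hδN, hδc⟩ := (hZmem δ).mp hδ
    have h1 := hδc 1 1
    rw [mul_one, map_one] at h1
    simp only [inv_one, one_mul, mul_one] at h1
    have : δ 1 * 1 = δ 1 * δ 1 := by rw [mul_one]; exact h1
    exact (mul_left_cancel this).symm
  have hZinv : ∀ δ : G ⧸ N → G, δ ∈ Z → ∀ x, δ x⁻¹ = s x * (δ x)⁻¹ * (s x)⁻¹ := by
    intro δ hδ x
    obtain ⟨hδN, hδc⟩ := (hZmem δ).mp hδ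
    have h1 := hδc x⁻¹ x
    rw [inv_mul_cancel, hZone δ hδ] at h1
    have h2 : δ x⁻¹ = s x * ((s x)⁻¹ * δ x⁻¹ * s x * δ x) * (δ x)⁻¹ * (s x)⁻¹ := by
      group
    rw [← h1] at h2
    rw [h2]
    group
  have hZext : ∀ δ δ' : G ⧸ N → G, δ ∈ Z → δ' ∈ Z →
      ∀ S : Set (G ⧸ N), Subgroup.closure S = ⊤ → (∀ x ∈ S, δ x = δ' x) → δ = δ' := by
    intro δ δ' hδ hδ' S hS hag
    obtain ⟨hδN, hδc⟩ := (hZmem δ).mp hδ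
    obtain ⟨hδ'N, hδ'c⟩ := (hZmem δ').mp hδ'
    let T : Subgroup (G ⧸ N) :=
      { carrier := {x | δ x = δ' x}
        one_mem' := by
          show δ 1 = δ' 1
          rw [hZone δ hδ, hZone δ' hδ']
        mul_mem' := by
          rintro x y hx hy
          show δ (x * y) = δ' (x * y)
          rw [hδc, hδ'c, (hx : δ x = δ' x), (hy : δ y = δ' y)]
        inv_mem' := by
          rintro x hx
          show δ x⁻¹ = δ' x⁻¹
          rw [hZinv δ hδ, hZinv δ' hδ', (hx : δ x = δ' x)] }
    have hT : Subgroup.closure S ≤ T := (Subgroup.closure_le _).mpr hag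
    rw [hS] at hT
    funext x
    exact hT (Subgroup.mem_top x)
  -- the graph of a cocycle generates a proper subgroup
  have hgraph : ∀ δ : G ⧸ N → G, δ ∈ Z → ∀ q : Fin d → G ⧸ N,
      Subgroup.closure (Set.range fun i => s (q i) * δ (q i)) ≠ ⊤ := by
    intro δ hδ q hcl
    obtain ⟨hδN, hδc⟩ := (hZmem δ).mp hδ
    have hψmul : ∀ a b : G ⧸ N, s (a * b) * δ (a * b) = (s a * δ a) * (s b * δ b) := by
      intro a b
      rw [hδc, map_mul]
      group
    let ψ : (G ⧸ N) →* G := MonoidHom.mk' (fun x => s x * δ x) hψmul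
    have hrange : Subgroup.closure (Set.range fun i => s (q i) * δ (q i)) ≤ ψ.range := by
      refine (Subgroup.closure_le _).mpr ?_
      rintro _ ⟨i, rfl⟩
      exact ⟨q i, rfl⟩
    rw [hcl] at hrange
    have hn₀ : n₀ ∈ ψ.range := hrange (Subgroup.mem_top n₀)
    obtain ⟨x, hx⟩ := hn₀
    have hπψ : π (ψ x) = x := by
      show π (s x * δ x) = x
      rw [map_mul, hs1, (hπmem (δ x)).mpr (hδN x), mul_one]
    have hx1 : x = 1 := by
      rw [hx] at hπψ
      rw [← hπψ, (hπmem n₀).mpr hn₀N]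
    rw [hx1] at hx
    apply hn₀1
    rw [← hx]
    show s 1 * δ 1 = 1
    rw [map_one, hZone δ hδ, mul_one]
  -- from a non-generating lift, produce a cocycle
  have hdir2 : ∀ y : Fin d → G, Subgroup.closure (Set.range fun i => π (y i)) = ⊤ →
      ∀ e : Fin d → G, (∀ i, e i ∈ N) →
      Subgroup.closure (Set.range fun i => y i * e i) ≠ ⊤ →
      ∃ δ ∈ Z, ∀ i, y i * e i = s (π (y i)) * δ (π (y i)) := by
    intro y hy e he hne
    set K := Subgroup.closure (Set.range fun i => y i * e i) with hKdef
    have hπe : ∀ i, π (y i * e i) = π (y i) := by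
      intro i
      rw [map_mul, (hπmem (e i)).mpr (he i), mul_one]
    have hmapK : K.map π = ⊤ := by
      rw [eq_top_iff, ← hy]
      refine (Subgroup.closure_le _).mpr ?_
      rintro _ ⟨i, rfl⟩
      exact ⟨y i * e i, Subgroup.subset_closure ⟨i, rfl⟩, hπe i⟩
    have hKinf : K ⊓ N = ⊥ := by
      rcases aux_dich N hNmin habelian K (aux_sup N K hmapK) with h | h
      · exact h
      · exact absurd (aux_top N K h hmapK) hne
    obtain ⟨κ, hκ1, hκ2, hκ3⟩ := aux_split N K hmapK hKinf
    refine ⟨fun x => (s x)⁻¹ * κ x, ?_, ?_⟩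
    · rw [hZmem]
      constructor
      · intro x
        rw [← hπmem, map_mul, map_inv, hs1, hκ1, inv_mul_cancel]
      · intro x y'
        show (s (x * y'))⁻¹ * κ (x * y') =
          (s y')⁻¹ * ((s x)⁻¹ * κ x) * s y' * ((s y')⁻¹ * κ y')
        rw [map_mul s, map_mul κ]
        group
    · intro i
      have h1 : κ (π (y i)) = y i * e i := by
        have := hκ3 (y i * e i) (Subgroup.subset_closure ⟨i, rfl⟩)
        rwa [hπe i] at this
      show y i * e i = s (π (y i)) * ((s (π (y i)))⁻¹ * κ (π (y i)))
      rw [h1]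
      group
  -- every lift of (g i) fails to generate
  have hAllfail : ∀ e : Fin d → G, (∀ i, e i ∈ N) →
      Subgroup.closure (Set.range fun i => g i * e i) ≠ ⊤ := by
    have hπg : ∀ i, π (g i) = ((g i : G) : G ⧸ N) := fun i => rfl
    let ev : (G ⧸ N → G) →* (Fin d → G) :=
      MonoidHom.mk' (fun δ i => δ (π (g i))) (fun a b => rfl)
    have hsingle : ∀ i : Fin d, ∀ e ∈ N, (Pi.mulSingle i e : Fin d → G) ∈ Z.map ev := by
      intro i e heN
      set u : Fin d → G := Pi.mulSingle i e with hudef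
      have hmem : ∀ j, u j ∈ N := by
        intro j
        by_cases h : j = i
        · subst h; rw [hudef, Pi.mulSingle_eq_same]; exact heN
        · rw [hudef, Pi.mulSingle_eq_of_ne h]; exact N.one_mem
      have hfail : Subgroup.closure (Set.range fun j => g j * u j) ≠ ⊤ := by
        by_cases h1 : e = 1
        · have hgu : (fun j => g j * u j) = g := by
            funext j
            rw [hudef, h1, Pi.mulSingle_one, Pi.one_apply, mul_one]
          rw [hgu]
          exact hng
        · have h2 := hcontra i e heN h1
          have hgu : (fun j => g j * u j) = Function.update g i (g i * e) := by
            funext j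
            by_cases h : j = i
            · subst h; rw [hudef, Pi.mulSingle_eq_same, Function.update_self]
            · rw [hudef, Pi.mulSingle_eq_of_ne h, Function.update_of_ne h, mul_one]
          rw [hgu]
          exact h2
      obtain ⟨δ, hδZ, hδeq⟩ := hdir2 g hgen u hmem hfail
      refine ⟨δ, hδZ, ?_⟩
      funext j
      show δ (π (g j)) = u j
      have h3 := hδeq j
      rw [hsg j] at h3
      exact (mul_left_cancel h3.symm)
    have hstep : ∀ k : ℕ, ∀ e : Fin d → G, (∀ i, e i ∈ N) →
        (∀ i : Fin d, k ≤ (i : ℕ) → e i = 1) → e ∈ Z.map ev := by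
      intro k
      induction k with
      | zero =>
        intro e _ h2
        have he1 : e = 1 := by
          funext i
          exact h2 i (Nat.zero_le _)
        rw [he1]
        exact (Z.map ev).one_mem
      | succ k ih =>
        intro e h1 h2
        by_cases hk : k < d
        · set i₀ : Fin d := ⟨k, hk⟩ with hi₀
          set e' : Fin d → G := Function.update e i₀ 1 with he'
          have h1' : ∀ i, e' i ∈ N := by
            intro j
            by_cases h : j = i₀
            · subst h; rw [he', Function.update_self]; exact N.one_mem
            · rw [he', Function.update_of_ne h]; exact h1 j
          have h2' : ∀ i : Fin d, k ≤ (i : ℕ) → e' i = 1 := by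
            intro j hj
            by_cases h : j = i₀
            · subst h; rw [he', Function.update_self]
            · rw [he', Function.update_of_ne h]
              refine h2 j ?_
              have : (j : ℕ) ≠ k := fun hc => h (Fin.ext hc)
              omega
          have hsplit2 : e = e' * (Pi.mulSingle i₀ (e i₀) : Fin d → G) := by
            funext j
            show e j = e' j * (Pi.mulSingle i₀ (e i₀) : Fin d → G) j
            by_cases h : j = i₀
            · rw [h, he', Function.update_self, Pi.mulSingle_eq_same, one_mul]
            · rw [he', Function.update_of_ne h, Pi.mulSingle_eq_of_ne h, mul_one]
          rw [hsplit2]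
          exact Subgroup.mul_mem _ (ih e' h1' h2') (hsingle i₀ (e i₀) (h1 i₀))
        · refine ih e h1 ?_
          intro j hj
          exact absurd (lt_of_le_of_lt hj j.isLt) (by omega)
    intro e he
    have heE : e ∈ Z.map ev := by
      refine hstep d e he ?_
      intro i hi
      exact absurd i.isLt (by omega)
    obtain ⟨δ, hδZ, hδe⟩ := heE
    have hee : (fun i => g i * e i) = fun i => s (π (g i)) * δ (π (g i)) := by
      funext i
      rw [hsg i]
      congr 1
      exact (congrFun hδe i).symm
    rw [hee]
    exact hgraph δ hδZ (fun i => π (g i))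
  -- get a generating d-tuple from rank G = d
  obtain ⟨S, hScard, hSclo⟩ := Group.rank_spec G
  have hScard' : S.card = d := by rw [hScard, hrk]
  let xeq := Finset.equivFinOfCardEq hScard'
  let x : Fin d → G := fun i => ((xeq.symm i : S) : G)
  have hxclo : Subgroup.closure (Set.range x) = ⊤ := by
    have hxr : Set.range x = (S : Set G) := by
      ext a
      constructor
      · rintro ⟨i, rfl⟩
        exact (xeq.symm i).2
      · intro ha
        exact ⟨xeq ⟨a, ha⟩, by simp [x]⟩
    rw [hxr]
    exact hSclo
  have hxq : Subgroup.closure (Set.range fun i => π (x i)) = ⊤ := by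
    have h1 : (Set.range fun i => π (x i)) = π '' Set.range x := by
      rw [← Set.range_comp]; rfl
    rw [h1, ← MonoidHom.map_closure, hxclo, Subgroup.map_top_of_surjective π hπsurj]
  -- choose cocycles
  have hexists : ∀ p : Fin d → ↥N, ∃ δ, δ ∈ Z ∧
      ∀ i, g i * (p i : G) = s (π (g i)) * δ (π (g i)) := by
    intro p
    obtain ⟨δ, h1, h2⟩ := hdir2 g hgen (fun i => (p i : G)) (fun i => (p i).2)
      (hAllfail _ (fun i => (p i).2))
    exact ⟨δ, h1, h2⟩
  choose δf hδfZ hδfeq using hexists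
  have hmemN : ∀ (p : Fin d → ↥N) (i : Fin d),
      (x i)⁻¹ * (s (π (x i)) * δf p (π (x i))) ∈ N := by
    intro p i
    have hδN := ((hZmem (δf p)).mp (hδfZ p)).1
    rw [← hπmem, map_mul, map_mul, map_inv, hs1, (hπmem _).mpr (hδN (π (x i))), mul_one,
      inv_mul_cancel]
  let f : (Fin d → ↥N) → (Fin d → ↥N) := fun p i =>
    ⟨(x i)⁻¹ * (s (π (x i)) * δf p (π (x i))), hmemN p i⟩
  have hfinj : Function.Injective f := by
    intro p q hpq
    have hag : ∀ i, δf p (π (x i)) = δf q (π (x i)) := by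
      intro i
      have h1 : ((f p i : ↥N) : G) = ((f q i : ↥N) : G) := by rw [hpq]
      have h1' : (x i)⁻¹ * (s (π (x i)) * δf p (π (x i))) =
          (x i)⁻¹ * (s (π (x i)) * δf q (π (x i))) := h1
      exact mul_left_cancel (mul_left_cancel h1')
    have hδeq : δf p = δf q := by
      refine hZext _ _ (hδfZ p) (hδfZ q) (Set.range fun i => π (x i)) hxq ?_
      rintro _ ⟨i, rfl⟩
      exact hag i
    funext i
    apply Subtype.ext
    have h1 := hδfeq p i
    have h2 := hδfeq q i
    rw [hδeq] at h1
    rw [← h2] at h1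
    exact mul_left_cancel h1
  have hfsurj : Function.Surjective f := Finite.injective_iff_surjective.mp hfinj
  obtain ⟨p, hp⟩ := hfsurj 1
  have hx_in : ∀ i, x i = s (π (x i)) * δf p (π (x i)) := by
    intro i
    have h1 : ((f p i : ↥N) : G) = 1 := by rw [congrFun hp i]; rfl
    have h1' : (x i)⁻¹ * (s (π (x i)) * δf p (π (x i))) = 1 := h1
    rw [inv_mul_eq_one] at h1'
    exact h1'
  have hfinal : Subgroup.closure (Set.range x) ≠ ⊤ := by
    have hxr : Set.range x = Set.range (fun i => s (π (x i)) * δf p (π (x i))) :=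
      congrArg Set.range (funext hx_in)
    rw [hxr]
    exact hgraph (δf p) (hδfZ p) (fun i => π (x i))
  exact hfinal hxclo
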